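/- For every integer k ≥ 2, ∫₀^{2πk} sin θ · cos(θ/k) · (∫₀^θ cos τ · cos(τ/k) dτ) dθ = π k³ / (2(k² − 1)). Equivalently, (1/(2πk)) times this iterated integral equals 1/α with α = 4(1 − k⁻²). -/

import Mathlib

open Real

lemma inner_int (K : ℝ) (hK0 : K ≠ 0) (hp : (1:ℝ) + 1/K ≠ 0) (hm : (1:ℝ) - 1/K ≠ 0) (x : ℝ) :
    (∫ τ in (0:ℝ)..x, Real.cos τ * Real.cos (τ / K)) =
      (Real.sin (x + x/K) / (1 + 1/K) + Real.sin (x - x/K) / (1 - 1/K)) / 2 := by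
  have h := intervalIntegral.integral_eq_sub_of_hasDerivAt
    (f := fun t => (Real.sin (t + t/K) / (1 + 1/K) + Real.sin (t - t/K) / (1 - 1/K)) / 2)
    (f' := fun t => Real.cos t * Real.cos (t / K)) (a := 0) (b := x)
    (fun t _ => by
      have h1 : HasDerivAt (fun t : ℝ => t + t/K) (1 + 1/K) t :=
        (hasDerivAt_id t).add ((hasDerivAt_id t).div_const K)
      have h2 : HasDerivAt (fun t : ℝ => t - t/K) (1 - 1/K) t :=
        (hasDerivAt_id t).sub ((hasDerivAt_id t).div_const K)
      have h3 := (h1.sin).div_const (1 + 1/K)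
      have h4 := (h2.sin).div_const (1 - 1/K)
      have h5 := (h3.add h4).div_const 2
      refine h5.congr_deriv ?_
      rw [mul_div_assoc, div_self hp, mul_one, mul_div_assoc, div_self hm, mul_one,
        Real.cos_add, Real.cos_sub]
      ring)
    ((Real.continuous_cos.mul (Real.continuous_cos.comp (continuous_id.div_const K))).intervalIntegrable 0 x)
  simpa using h

noncomputable def Phi (K t : ℝ) : ℝ :=
  ((t/2 - Real.sin ((t + t/K) + (t + t/K)) / (4*(1+1/K))) / (1+1/K)
   + (t/2 - Real.sin ((t - t/K) + (t - t/K)) / (4*(1-1/K))) / (1-1/K)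
   + (1/(1+1/K) + 1/(1-1/K)) * (Real.sin (t/K + t/K) * K / 4 - Real.sin (t + t) / 4)) / 4

lemma outer_deriv (K : ℝ) (hK0 : K ≠ 0)
    (hp1 : K + 1 ≠ 0) (hm1 : K - 1 ≠ 0) (t : ℝ) :
    HasDerivAt (Phi K)
      (Real.sin t * Real.cos (t / K) *
        ((Real.sin (t + t/K) / (1 + 1/K) + Real.sin (t - t/K) / (1 - 1/K)) / 2)) t := by
  have hA : HasDerivAt (fun t : ℝ => t + t/K) (1 + 1/K) t :=
    (hasDerivAt_id t).add ((hasDerivAt_id t).div_const K)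
  have hB : HasDerivAt (fun t : ℝ => t - t/K) (1 - 1/K) t :=
    (hasDerivAt_id t).sub ((hasDerivAt_id t).div_const K)
  have hA2 := hA.add hA
  have hB2 := hB.add hB
  have hC : HasDerivAt (fun t : ℝ => t/K + t/K) (1/K + 1/K) t :=
    ((hasDerivAt_id t).div_const K).add ((hasDerivAt_id t).div_const K)
  have hD : HasDerivAt (fun t : ℝ => t + t) (1 + 1) t :=
    (hasDerivAt_id t).add (hasDerivAt_id t)
  have h1 := ((hasDerivAt_id t).div_const 2).sub (hA2.sin.div_const (4*(1+1/K)))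
  have h2 := ((hasDerivAt_id t).div_const 2).sub (hB2.sin.div_const (4*(1-1/K)))
  have h3 := (((hC.sin).mul_const K).div_const 4).sub ((hD.sin).div_const 4)
  have h := (((h1.div_const (1+1/K)).add (h2.div_const (1-1/K))).add
    (h3.const_mul (1/(1+1/K) + 1/(1-1/K)))).div_const 4
  refine h.congr_deriv ?_
  simp only [Pi.add_apply]
  have e1 : t/K + t/K = (t + t/K) - (t - t/K) := by ring
  have e2 : t + t = (t + t/K) + (t - t/K) := by ring
  rw [e1, e2, Real.cos_sub, Real.cos_add ((t+t/K)) ((t-t/K)),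
    Real.cos_add (t+t/K) (t+t/K), Real.cos_add (t-t/K) (t-t/K)]
  have hq : Real.cos (t+t/K) * Real.cos (t+t/K) = 1 - Real.sin (t+t/K) * Real.sin (t+t/K) := by
    nlinarith [Real.sin_sq_add_cos_sq (t+t/K)]
  have hw : Real.cos (t-t/K) * Real.cos (t-t/K) = 1 - Real.sin (t-t/K) * Real.sin (t-t/K) := by
    nlinarith [Real.sin_sq_add_cos_sq (t-t/K)]
  have e3 : Real.sin t * Real.cos (t/K)
      = (Real.sin (t+t/K) + Real.sin (t-t/K)) / 2 := by
    rw [Real.sin_add, Real.sin_sub]; ring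
  rw [hq, hw, e3]
  field_simp
  ring

lemma phi_end (k : ℕ) (hk : 2 ≤ k) :
    Phi (k:ℝ) (2 * Real.pi * k) - Phi (k:ℝ) 0
      = Real.pi * (k:ℝ)^3 / (2 * ((k:ℝ)^2 - 1)) := by
  have hK2 : (2:ℝ) ≤ (k:ℝ) := by exact_mod_cast hk
  have hK0 : (k:ℝ) ≠ 0 := by positivity
  have hp1 : (k:ℝ) + 1 ≠ 0 := by positivity
  have hm1 : (k:ℝ) - 1 ≠ 0 := by intro h; nlinarith
  have hs0 : Real.sin ((2*π*(k:ℝ) + 2*π*(k:ℝ)/(k:ℝ)) + (2*π*(k:ℝ) + 2*π*(k:ℝ)/(k:ℝ))) = 0 := by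
    have : (2*π*(k:ℝ) + 2*π*(k:ℝ)/(k:ℝ)) + (2*π*(k:ℝ) + 2*π*(k:ℝ)/(k:ℝ))
        = ((4*(k:ℤ)+4 : ℤ):ℝ)*π := by push_cast; field_simp; ring
    rw [this, Real.sin_int_mul_pi]
  have hs1 : Real.sin ((2*π*(k:ℝ) - 2*π*(k:ℝ)/(k:ℝ)) + (2*π*(k:ℝ) - 2*π*(k:ℝ)/(k:ℝ))) = 0 := by
    have : (2*π*(k:ℝ) - 2*π*(k:ℝ)/(k:ℝ)) + (2*π*(k:ℝ) - 2*π*(k:ℝ)/(k:ℝ))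
        = ((4*(k:ℤ)-4 : ℤ):ℝ)*π := by push_cast; field_simp; ring
    rw [this, Real.sin_int_mul_pi]
  have hs2 : Real.sin (2*π*(k:ℝ)/(k:ℝ) + 2*π*(k:ℝ)/(k:ℝ)) = 0 := by
    have : 2*π*(k:ℝ)/(k:ℝ) + 2*π*(k:ℝ)/(k:ℝ) = ((4 : ℤ):ℝ)*π := by push_cast; field_simp; ring
    rw [this, Real.sin_int_mul_pi]
  have hs3 : Real.sin (2*π*(k:ℝ) + 2*π*(k:ℝ)) = 0 := by
    have : 2*π*(k:ℝ) + 2*π*(k:ℝ) = ((4*(k:ℤ) : ℤ):ℝ)*π := by push_cast; ring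
    rw [this, Real.sin_int_mul_pi]
  have h1 : (k:ℝ)^2 - 1 ≠ 0 := by intro h; nlinarith
  simp only [Phi, hs0, hs1, hs2, hs3]
  norm_num
  field_simp
  ring

theorem stmt5 (k : ℕ) (hk : 2 ≤ k) :
    (∫ θ in (0:ℝ)..(2 * Real.pi * k),
        Real.sin θ * Real.cos (θ / k) * ∫ τ in (0:ℝ)..θ, Real.cos τ * Real.cos (τ / k))
      = Real.pi * (k : ℝ) ^ 3 / (2 * ((k : ℝ) ^ 2 - 1)) ∧
    (1 / (2 * Real.pi * k)) *
      (∫ θ in (0:ℝ)..(2 * Real.pi * k),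
        Real.sin θ * Real.cos (θ / k) * ∫ τ in (0:ℝ)..θ, Real.cos τ * Real.cos (τ / k))
      = 1 / (4 * (1 - ((k : ℝ) ^ 2)⁻¹)) := by
  have hK2 : (2:ℝ) ≤ (k:ℝ) := by exact_mod_cast hk
  have hK0 : (k:ℝ) ≠ 0 := by positivity
  have hp1 : (k:ℝ) + 1 ≠ 0 := by positivity
  have hm1 : (k:ℝ) - 1 ≠ 0 := by intro h; nlinarith
  have hp : (1:ℝ) + 1/(k:ℝ) ≠ 0 := by positivity
  have hm : (1:ℝ) - 1/(k:ℝ) ≠ 0 := by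
    have h1 : 1/(k:ℝ) < 1 := by rw [div_lt_one (by linarith)]; linarith
    intro h; linarith
  have hpi : Real.pi ≠ 0 := Real.pi_ne_zero
  have hmain : (∫ θ in (0:ℝ)..(2 * Real.pi * k),
        Real.sin θ * Real.cos (θ / k) * ∫ τ in (0:ℝ)..θ, Real.cos τ * Real.cos (τ / k))
      = Real.pi * (k : ℝ) ^ 3 / (2 * ((k : ℝ) ^ 2 - 1)) := by
    have hrw : (∫ θ in (0:ℝ)..(2 * Real.pi * k),
          Real.sin θ * Real.cos (θ / k) * ∫ τ in (0:ℝ)..θ, Real.cos τ * Real.cos (τ / k))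
        = ∫ θ in (0:ℝ)..(2 * Real.pi * k),
            Real.sin θ * Real.cos (θ / k) *
              ((Real.sin (θ + θ/(k:ℝ)) / (1 + 1/(k:ℝ)) + Real.sin (θ - θ/(k:ℝ)) / (1 - 1/(k:ℝ))) / 2) := by
      simp only [inner_int (k:ℝ) hK0 hp hm]
    rw [hrw]
    have hval := intervalIntegral.integral_eq_sub_of_hasDerivAt
      (f := Phi (k:ℝ))
      (f' := fun θ => Real.sin θ * Real.cos (θ / (k:ℝ)) *
        ((Real.sin (θ + θ/(k:ℝ)) / (1 + 1/(k:ℝ)) + Real.sin (θ - θ/(k:ℝ)) / (1 - 1/(k:ℝ))) / 2))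
      (a := 0) (b := 2 * Real.pi * k)
      (fun t _ => outer_deriv (k:ℝ) hK0 hp1 hm1 t)
      (Continuous.intervalIntegrable (by fun_prop) 0 _)
    rw [hval]
    exact phi_end k hk
  refine ⟨hmain, ?_⟩
  rw [hmain]
  have h1 : (k:ℝ)^2 - 1 ≠ 0 := by intro h; nlinarith
  field_simp
  ring
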